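/- Define the formal power series H(x) = Σ_{n≥0} a_n x^n over ℤ with a_n = Σ_{k=0}^n C(n,k)^2 C(2k,k). For every prime p, the reduction of H modulo p satisfies H(x) = H_p(x) · H_p(x^p) · H_p(x^{p^2}) · ⋯ in 𝔽_p[[x]], where H_p(x) = Σ_{n=0}^{p-1} a_n x^n mod p. -/

import Mathlib

open PowerSeries Finset

/-- The coefficients `a n = Σ_{k=0}^n C(n,k)² C(2k,k)`. -/
def aSeq (n : ℕ) : ℕ :=
  ∑ k ∈ Finset.range (n + 1), (Nat.choose n k) ^ 2 * Nat.choose (2 * k) k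

/-- The generating series `H` reduced mod `p`. -/
noncomputable def Hmod (p : ℕ) : PowerSeries (ZMod p) :=
  PowerSeries.mk fun n => (aSeq n : ZMod p)

/-- The truncation `H_p(x) = Σ_{n=0}^{p-1} a_n x^n` mod `p`, as a polynomial. -/
noncomputable def Htrunc (p : ℕ) : Polynomial (ZMod p) :=
  ∑ n ∈ Finset.range p, Polynomial.C (aSeq n : ZMod p) * Polynomial.X ^ n

section auxLemmas

open Nat

variable (p : ℕ) [hFp : Fact p.Prime]

/-- Lucas' theorem, cast into `ZMod p`. -/
lemma lucasZ (n k : ℕ) :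
    (Nat.choose n k : ZMod p) = (Nat.choose (n % p) (k % p) : ZMod p) * Nat.choose (n / p) (k / p) := by
  have h := Choose.choose_modEq_choose_mod_mul_choose_div (n := n) (k := k) (p := p)
  have := (ZMod.intCast_eq_intCast_iff _ _ _).mpr h
  push_cast at this
  exact_mod_cast this

/-- Central binomial coefficients `C(2j,j)` with `p/2 ≤ j < p` vanish mod `p`. -/
lemma central_vanish {j : ℕ} (hj : j < p) (h2 : p ≤ 2 * j) :
    ((Nat.choose (2 * j) j : ZMod p)) = 0 := by
  have hp : 0 < p := hFp.out.pos
  have hdiv : 2 * j / p = 1 := by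
    apply Nat.div_eq_of_lt_le <;> omega
  have hmod : 2 * j % p = 2 * j - p := by
    rw [Nat.mod_eq_sub_mod h2, Nat.mod_eq_of_lt (by omega)]
  have hjm : j % p = j := Nat.mod_eq_of_lt hj
  have hjd : j / p = 0 := Nat.div_eq_of_lt hj
  rw [lucasZ p, hdiv, hmod, hjm, hjd, Nat.choose_eq_zero_of_lt (by omega)]
  simp

/-- Termwise Lucas-type factorization for the summands of `aSeq`. -/
lemma term_eq {r k0 : ℕ} (m k1 : ℕ) (hr : r < p) (hk0 : k0 < p) :
    ((Nat.choose (p*m+r) (p*k1+k0) : ZMod p))^2 * (Nat.choose (2*(p*k1+k0)) (p*k1+k0)) =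
      ((Nat.choose m k1 : ZMod p))^2 * (Nat.choose (2*k1) k1) *
      (((Nat.choose r k0 : ZMod p))^2 * (Nat.choose (2*k0) k0)) := by
  have hp : 0 < p := hFp.out.pos
  have hnm : (p*m+r) % p = r := by rw [Nat.mul_add_mod, Nat.mod_eq_of_lt hr]
  have hnd : (p*m+r) / p = m := by rw [Nat.mul_add_div hp, Nat.div_eq_of_lt hr]; omega
  have hkm : (p*k1+k0) % p = k0 := by rw [Nat.mul_add_mod, Nat.mod_eq_of_lt hk0]
  have hkd : (p*k1+k0) / p = k1 := by rw [Nat.mul_add_div hp, Nat.div_eq_of_lt hk0]; omega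
  have h1 : (Nat.choose (p*m+r) (p*k1+k0) : ZMod p) = (Nat.choose r k0 : ZMod p) * Nat.choose m k1 := by
    rw [lucasZ p, hnm, hnd, hkm, hkd]
  rcases lt_or_ge (2*k0) p with h2 | h2
  · have hm2 : (2*(p*k1+k0)) % p = 2*k0 := by
      have e : 2*(p*k1+k0) = p*(2*k1) + 2*k0 := by ring
      rw [e, Nat.mul_add_mod, Nat.mod_eq_of_lt h2]
    have hd2 : (2*(p*k1+k0)) / p = 2*k1 := by
      have e : 2*(p*k1+k0) = p*(2*k1) + 2*k0 := by ring
      rw [e, Nat.mul_add_div hp, Nat.div_eq_of_lt h2]; omega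
    rw [h1, lucasZ p (2*(p*k1+k0)), hm2, hd2, hkm, hkd]
    ring
  · have hz : (Nat.choose (2*(p*k1+k0)) (p*k1+k0) : ZMod p) = 0 := by
      have hm2 : (2*(p*k1+k0)) % p = 2*k0 - p := by
        have e : 2*(p*k1+k0) = p*(2*k1+1) + (2*k0 - p) := by
          have h3 : p*(2*k1+1) = p*k1 + p*k1 + p := by ring
          omega
        rw [e, Nat.mul_add_mod, Nat.mod_eq_of_lt (by omega)]
      have hc0 : Nat.choose (2*k0-p) k0 = 0 := Nat.choose_eq_zero_of_lt (by omega)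
      rw [lucasZ p, hm2, hkm, hc0]
      simp
    rw [hz, central_vanish p hk0 h2]
    ring

lemma aSeq_cast (n : ℕ) :
    (aSeq n : ZMod p) = ∑ k ∈ Finset.range (n+1), (Nat.choose n k : ZMod p)^2 * Nat.choose (2*k) k := by
  unfold aSeq
  push_cast
  rfl

lemma sum_range_pmul {β : Type} [AddCommMonoid β] (f : ℕ → β) (M : ℕ) :
    ∑ k ∈ range (p*M), f k = ∑ k1 ∈ range M, ∑ k0 ∈ range p, f (p*k1+k0) := by
  induction M with
  | zero => simp
  | succ M ih =>
    have e : p*(M+1) = p*M + p := by ring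
    rw [Finset.sum_range_succ, ← ih, e, Finset.sum_range_add]

/-- The Lucas-type congruence `a_{pm+r} ≡ a_m a_r (mod p)` for `r < p`. -/
lemma aSeq_mul (m r : ℕ) (hr : r < p) :
    (aSeq (p*m+r) : ZMod p) = (aSeq m : ZMod p) * (aSeq r : ZMod p) := by
  have hp : 0 < p := hFp.out.pos
  rw [aSeq_cast, aSeq_cast, aSeq_cast]
  have h1 : ∑ k ∈ range (p*m+r+1), (Nat.choose (p*m+r) k : ZMod p)^2 * Nat.choose (2*k) k
      = ∑ k ∈ range (p*(m+1)), (Nat.choose (p*m+r) k : ZMod p)^2 * Nat.choose (2*k) k := by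
    apply Finset.sum_subset
    · apply Finset.range_subset_range.mpr
      have : p*(m+1) = p*m + p := by ring
      omega
    · intro k _ hk
      rw [Finset.mem_range, not_lt] at hk
      rw [Nat.choose_eq_zero_of_lt (by omega)]
      push_cast
      ring
  rw [h1, sum_range_pmul p]
  have h2 : ∀ k1, ∑ k0 ∈ range p, (Nat.choose (p*m+r) (p*k1+k0) : ZMod p)^2 * Nat.choose (2*(p*k1+k0)) (p*k1+k0)
      = ((Nat.choose m k1 : ZMod p)^2 * Nat.choose (2*k1) k1) * ∑ k0 ∈ range p, (Nat.choose r k0 : ZMod p)^2 * Nat.choose (2*k0) k0 := by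
    intro k1
    rw [Finset.mul_sum]
    apply Finset.sum_congr rfl
    intro k0 hk0
    rw [Finset.mem_range] at hk0
    exact term_eq p m k1 hr hk0
  have h3 : ∑ k0 ∈ range p, (Nat.choose r k0 : ZMod p)^2 * Nat.choose (2*k0) k0
      = ∑ k0 ∈ range (r+1), (Nat.choose r k0 : ZMod p)^2 * Nat.choose (2*k0) k0 := by
    symm
    apply Finset.sum_subset (Finset.range_subset_range.mpr (by omega))
    intro k0 _ hk0
    rw [Finset.mem_range, not_lt] at hk0
    rw [Nat.choose_eq_zero_of_lt (by omega)]
    push_cast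
    ring
  calc ∑ k1 ∈ range (m+1), ∑ k0 ∈ range p, (Nat.choose (p*m+r) (p*k1+k0) : ZMod p)^2 * Nat.choose (2*(p*k1+k0)) (p*k1+k0)
      = ∑ k1 ∈ range (m+1), ((Nat.choose m k1 : ZMod p)^2 * Nat.choose (2*k1) k1) * ∑ k0 ∈ range p, (Nat.choose r k0 : ZMod p)^2 * Nat.choose (2*k0) k0 := by
        exact Finset.sum_congr rfl fun k1 _ => h2 k1
    _ = _ := by rw [← Finset.sum_mul, h3]

/-- `aeval` at `X^t` in power series is coercion of `expand`. -/
lemma aeval_X_pow_eq (t : ℕ) (Q : Polynomial (ZMod p)) :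
    Polynomial.aeval ((PowerSeries.X : PowerSeries (ZMod p)) ^ t) Q
      = ((Polynomial.expand (ZMod p) t Q : Polynomial (ZMod p)) : PowerSeries (ZMod p)) := by
  induction Q using Polynomial.induction_on' with
  | add f g hf hg => simp [hf, hg]
  | monomial n a =>
    rw [Polynomial.aeval_monomial, Polynomial.expand_monomial, ← pow_mul]
    rw [show (algebraMap (ZMod p) (PowerSeries (ZMod p))) a = PowerSeries.C (R := ZMod p) a from rfl]
    ext k
    rw [PowerSeries.coeff_C_mul]
    simp [Polynomial.coeff_coe, Polynomial.coeff_monomial, PowerSeries.coeff_X_pow, PowerSeries.coeff_monomial,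
      mul_comm t n, eq_comm]

lemma Htrunc_coeff (n : ℕ) :
    (Htrunc p).coeff n = if n < p then (aSeq n : ZMod p) else 0 := by
  unfold Htrunc
  rw [Polynomial.finset_sum_coeff]
  simp only [Polynomial.coeff_C_mul, Polynomial.coeff_X_pow]
  by_cases h : n < p
  · rw [if_pos h, Finset.sum_eq_single n]
    · rw [if_pos rfl, mul_one]
    · intro b _ hb
      rw [if_neg (fun e => hb e.symm), mul_zero]
    · intro hn
      exact absurd (Finset.mem_range.mpr h) hn
  · rw [if_neg h]
    apply Finset.sum_eq_zero
    intro b hb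
    rw [Finset.mem_range] at hb
    rw [if_neg (by omega), mul_zero]

/-- The polynomial version of the main theorem. -/
lemma poly_coeff : ∀ N n, n < p^N →
    (∏ i ∈ range N, Polynomial.expand (ZMod p) (p^i) (Htrunc p)).coeff n = (aSeq n : ZMod p) := by
  intro N
  induction N with
  | zero =>
    intro n hn
    simp only [pow_zero, Nat.lt_one_iff] at hn
    subst hn
    simp [aSeq]
  | succ N ih =>
    intro n hn
    have hp : 0 < p := hFp.out.pos
    have hsplit : ∏ i ∈ range (N+1), Polynomial.expand (ZMod p) (p^i) (Htrunc p)
        = (Polynomial.expand (ZMod p) p (∏ i ∈ range N, Polynomial.expand (ZMod p) (p^i) (Htrunc p))) * Htrunc p := by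
      rw [Finset.prod_range_succ']
      congr 1
      · rw [map_prod]
        apply Finset.prod_congr rfl
        intro i _
        rw [Polynomial.expand_expand]
        congr 1
        rw [pow_succ]
        ring
      · rw [pow_zero, Polynomial.expand_one]
    rw [hsplit, Polynomial.coeff_mul]
    rw [Finset.sum_eq_single_of_mem (p*(n/p), n%p)]
    · rw [Polynomial.coeff_expand_mul' hp, Htrunc_coeff]
      have h1 : n / p < p ^ N := by
        rw [Nat.div_lt_iff_lt_mul hp]
        calc n < p^(N+1) := hn
          _ = p^N * p := by ring
      rw [ih _ h1, if_pos (Nat.mod_lt _ hp), ← aSeq_mul p _ _ (Nat.mod_lt _ hp),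
        Nat.div_add_mod]
    · rw [Finset.HasAntidiagonal.mem_antidiagonal, Nat.div_add_mod]
    · rintro ⟨i, j⟩ hmem hne
      rw [Finset.HasAntidiagonal.mem_antidiagonal] at hmem
      rw [Polynomial.coeff_expand hp]
      by_cases hdvd : p ∣ i
      · rw [if_pos hdvd]
        rcases hdvd with ⟨c, hc⟩
        by_cases hj : j < p
        · exfalso
          apply hne
          have huniq : n / p = c ∧ n % p = j :=
            (Nat.div_mod_unique (a := n) (b := p) (d := c) (c := j) hp).mpr ⟨by omega, hj⟩
          obtain ⟨hd, hm⟩ := huniq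
          simp only [Prod.mk.injEq]
          exact ⟨by rw [hd, ← hc], hm.symm⟩
        · rw [Htrunc_coeff, if_neg hj, mul_zero]
      · rw [if_neg hdvd, zero_mul]

end auxLemmas

/-- In `𝔽_p⟦x⟧`, `H(x) = H_p(x) · H_p(x^p) · H_p(x^{p²}) ⋯`: every partial product
`∏_{i<N} H_p(x^{p^i})` agrees with `H` in all coefficients of index `< p^N`, which is
exactly the convergence of the infinite product to `H` in the `(x)`-adic topology. -/
theorem H_eq_prod_Htrunc (p : ℕ) (hp : p.Prime) (N n : ℕ) (hn : n < p ^ N) :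
    PowerSeries.coeff (R := ZMod p) n (Hmod p) =
      PowerSeries.coeff (R := ZMod p) n
        (∏ i ∈ Finset.range N,
          Polynomial.aeval ((PowerSeries.X : PowerSeries (ZMod p)) ^ p ^ i) (Htrunc p)) := by
  haveI : Fact p.Prime := ⟨hp⟩
  have h1 : ∏ i ∈ Finset.range N,
      Polynomial.aeval ((PowerSeries.X : PowerSeries (ZMod p)) ^ p ^ i) (Htrunc p)
      = ((∏ i ∈ Finset.range N, Polynomial.expand (ZMod p) (p^i) (Htrunc p) : Polynomial (ZMod p)) : PowerSeries (ZMod p)) := by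
    rw [← Polynomial.coeToPowerSeries.ringHom_apply, map_prod]
    apply Finset.prod_congr rfl
    intro i _
    rw [Polynomial.coeToPowerSeries.ringHom_apply, aeval_X_pow_eq]
  rw [h1, Polynomial.coeff_coe, poly_coeff p N n hn]
  simp [Hmod]
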